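/- There exists a hopfian semigroup S and a subsemigroup T of S such that the complement S \ T is finite and T is not hopfian. (Hence hopficity is not in general inherited by subsemigroups of finite Rees index.) -/

import Mathlib

/-- A semigroup is *hopfian* if every surjective semigroup endomorphism is injective. -/
def IsHopfian (S : Type*) [Semigroup S] : Prop :=
  ∀ f : S →ₙ* S, Function.Surjective f → Function.Injective f

namespace Stmt7

/-- doubling map -/
def dbl {A : Type*} [Add A] (x : A) : A := x + x

lemma dbl_iter_add {A : Type*} [AddCommMonoid A] (n : ℕ) (x y : A) :
    dbl^[n] (x + y) = dbl^[n] x + dbl^[n] y := by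
  induction n generalizing x y with
  | zero => rfl
  | succ n ih =>
      rw [Function.iterate_succ_apply, Function.iterate_succ_apply,
        Function.iterate_succ_apply,
        show dbl (x + y) = dbl x + dbl y from add_add_add_comm x y x y, ih]

lemma dbl_iter_zero {A : Type*} [AddMonoid A] (n : ℕ) :
    dbl^[n] (0 : A) = 0 := by
  induction n with
  | zero => rfl
  | succ n ih => rw [Function.iterate_succ_apply, show dbl (0:A) = 0 from add_zero 0, ih]

lemma dbl_iter_neg {A : Type*} [AddCommGroup A] (n : ℕ) (x : A) :
    dbl^[n] (-x) = -(dbl^[n] x) := by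
  induction n generalizing x with
  | zero => rfl
  | succ n ih =>
      rw [Function.iterate_succ_apply, Function.iterate_succ_apply,
        show dbl (-x) = -(dbl x) from (neg_add x x).symm, ih]

abbrev QZ : Type := ℚ ⧸ AddSubgroup.zmultiples (1 : ℚ)

lemma mk_eq_iff (a b : ℚ) : (a : QZ) = (b : QZ) ↔ ∃ k : ℤ, b - a = (k : ℚ) := by
  rw [QuotientAddGroup.eq, AddSubgroup.mem_zmultiples_iff]
  constructor
  · rintro ⟨k, hk⟩
    refine ⟨k, ?_⟩
    have : (k : ℚ) * 1 = -a + b := by rw [← zsmul_eq_mul]; exact hk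
    linarith
  · rintro ⟨k, hk⟩
    refine ⟨k, ?_⟩
    rw [zsmul_eq_mul, mul_one]
    linarith

lemma mk_eq_zero_iff (a : ℚ) : (a : QZ) = 0 ↔ ∃ k : ℤ, a = (k : ℚ) := by
  have h0 : (0 : QZ) = ((0 : ℚ) : QZ) := rfl
  rw [h0, mk_eq_iff]
  constructor
  · rintro ⟨k, hk⟩; exact ⟨-k, by push_cast; linarith⟩
  · rintro ⟨k, hk⟩; exact ⟨-k, by push_cast; linarith⟩

lemma mk_add (a b : ℚ) : ((a + b : ℚ) : QZ) = (a : QZ) + (b : QZ) := rfl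

/-- The Prüfer 2-group: 2-power torsion in ℚ/ℤ. -/
def prufer : AddSubgroup QZ where
  carrier := {x | ∃ n : ℕ, dbl^[n] x = 0}
  zero_mem' := ⟨0, rfl⟩
  add_mem' := by
    rintro x y ⟨n, hn⟩ ⟨m, hm⟩
    refine ⟨m + n, ?_⟩
    rw [dbl_iter_add, Function.iterate_add_apply, hn, dbl_iter_zero,
      add_comm m n, Function.iterate_add_apply, hm, dbl_iter_zero, add_zero]
  neg_mem' := by
    rintro x ⟨n, hn⟩
    exact ⟨n, by rw [dbl_iter_neg, hn, neg_zero]⟩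

abbrev P := ↥prufer

lemma half_mk (q : ℚ) : ((q/2 : ℚ) : QZ) + ((q/2 : ℚ) : QZ) = (q : QZ) := by
  rw [← mk_add]; norm_num

def cQ : QZ := ((1/2 : ℚ) : QZ)

lemma cQ_add_cQ : cQ + cQ = 0 := by
  unfold cQ
  rw [← mk_add, show (1/2 : ℚ) + 1/2 = 1 by norm_num, mk_eq_zero_iff]
  exact ⟨1, by norm_num⟩

lemma cQ_ne_zero : cQ ≠ 0 := by
  intro h
  obtain ⟨k, hk⟩ := (mk_eq_zero_iff (1/2)).mp h
  have h2 : (2 * k : ℤ) = (1 : ℤ) := by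
    have : (2 * k : ℚ) = 1 := by linarith
    exact_mod_cast this
  omega

lemma cQ_mem : cQ ∈ prufer := ⟨1, cQ_add_cQ⟩

def cP : P := ⟨cQ, cQ_mem⟩

lemma cP_add_cP : cP + cP = 0 := Subtype.ext cQ_add_cQ

lemma cP_ne_zero : cP ≠ 0 := fun h => cQ_ne_zero (congrArg Subtype.val h)

lemma half_P (x : P) : ∃ y : P, y + y = x := by
  obtain ⟨n, hn⟩ := x.2
  obtain ⟨q, hq⟩ := QuotientAddGroup.mk_surjective (x : QZ)
  have h1 : ((q/2 : ℚ) : QZ) + ((q/2 : ℚ) : QZ) = (x : QZ) := by rw [half_mk, hq]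
  refine ⟨⟨((q/2 : ℚ) : QZ), ⟨n + 1, ?_⟩⟩, ?_⟩
  · rw [Function.iterate_succ_apply, show dbl ((q/2 : ℚ) : QZ) = (x : QZ) from h1]
    exact hn
  · exact Subtype.ext h1

lemma two_torsion (x : QZ) (h : x + x = 0) : x = 0 ∨ x = cQ := by
  obtain ⟨q, rfl⟩ := QuotientAddGroup.mk_surjective x
  rw [← mk_add, mk_eq_zero_iff] at h
  obtain ⟨k, hk⟩ := h
  rcases Int.even_or_odd k with ⟨j, hj⟩ | ⟨j, hj⟩
  · left
    rw [mk_eq_zero_iff]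
    refine ⟨j, ?_⟩
    have : (k : ℚ) = (j : ℚ) + (j : ℚ) := by exact_mod_cast hj
    linarith
  · right
    show (q : QZ) = ((1/2 : ℚ) : QZ)
    rw [mk_eq_iff]
    refine ⟨-j, ?_⟩
    have : (k : ℚ) = 2 * (j : ℚ) + 1 := by exact_mod_cast hj
    push_cast
    linarith

lemma two_torsion_P (x : P) (h : x + x = 0) : x = 0 ∨ x = cP := by
  have hv : (x : QZ) + (x : QZ) = 0 := by
    have := congrArg Subtype.val h
    simpa using this
  rcases two_torsion _ hv with h0 | hc
  · exact Or.inl (Subtype.ext h0)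
  · exact Or.inr (Subtype.ext hc)

lemma reach_c : ∀ (n : ℕ) (x : P), dbl^[n] x = 0 → x ≠ 0 → ∃ m, dbl^[m] x = cP := by
  intro n
  induction n with
  | zero => intro x h hx; exact absurd h hx
  | succ n ih =>
      intro x h hx
      by_cases h2 : x + x = 0
      · rcases two_torsion_P x h2 with h0 | hc
        · exact absurd h0 hx
        · exact ⟨0, hc⟩
      · have hd : dbl^[n] (dbl x) = 0 := by
          rw [← Function.iterate_succ_apply]; exact h
        obtain ⟨m, hm⟩ := ih (dbl x) hd h2
        exact ⟨m + 1, by rw [Function.iterate_succ_apply]; exact hm⟩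

lemma val_dbl_iter (m : ℕ) (x : P) : ((dbl^[m] x : P) : QZ) = dbl^[m] (x : QZ) := by
  induction m generalizing x with
  | zero => rfl
  | succ m ih =>
      rw [Function.iterate_succ_apply, Function.iterate_succ_apply,
        show dbl (x : QZ) = ((dbl x : P) : QZ) from rfl]
      exact ih (dbl x)

lemma mem_prufer_P (x : P) : ∃ n, dbl^[n] x = (0 : P) := by
  obtain ⟨n, hn⟩ := x.2
  exact ⟨n, Subtype.ext (by rw [val_dbl_iter]; exact hn)⟩

/-! ### The semigroup S = Option P -/

def pad : Option P → P := fun o => o.elim cP id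

@[simp] lemma pad_some (x : P) : pad (some x) = x := rfl
@[simp] lemma pad_none : pad none = cP := rfl

instance : Mul (Option P) := ⟨fun a b => some (pad a + pad b)⟩

lemma mul_def (a b : Option P) : a * b = some (pad a + pad b) := rfl

instance : Semigroup (Option P) where
  mul_assoc a b c := by
    simp only [mul_def, pad_some, add_assoc]

def T : Subsemigroup (Option P) where
  carrier := Set.range some
  mul_mem' := fun _ _ => ⟨_, rfl⟩

lemma compl_T_finite : ((T : Set (Option P))ᶜ).Finite := by
  apply Set.Finite.subset (Set.finite_singleton (none : Option P))
  intro o ho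
  cases o with
  | none => exact Set.mem_singleton _
  | some x => exact absurd ⟨x, rfl⟩ ho

/-! ### S is hopfian -/

lemma hopfS : IsHopfian (Option P) := by
  intro f hsurj
  have hfsome : ∀ x : P, ∃ u : P, f (some x) = some u := by
    intro x
    obtain ⟨y, hy⟩ := half_P x
    have hxy : some x = some y * some y := by rw [mul_def, pad_some, hy]
    rw [hxy, map_mul, mul_def]
    exact ⟨_, rfl⟩
  have hfnone : f none = none := by
    obtain ⟨s, hs⟩ := hsurj none
    cases s with
    | none => exact hs
    | some x =>
        obtain ⟨u, hu⟩ := hfsome x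
        rw [hu] at hs
        exact absurd hs (by simp)
  set φ : P → P := fun x => Classical.choose (hfsome x) with hφdef
  have hφ : ∀ x, f (some x) = some (φ x) := fun x => Classical.choose_spec (hfsome x)
  have φadd : ∀ x y, φ (x + y) = φ x + φ y := by
    intro x y
    have h1 : f (some (x + y)) = f (some x) * f (some y) := by
      rw [← map_mul]
      rfl
    rw [hφ, hφ, hφ, mul_def, pad_some, pad_some] at h1
    exact Option.some.inj h1
  have φzero : φ 0 = 0 := by
    have := φadd 0 0
    rw [add_zero] at this
    exact (left_eq_add.mp this)
  have φc : φ cP = cP := by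
    have h1 : none * some (0 : P) = some cP := by
      rw [mul_def, pad_none, pad_some, add_zero]
    have h2 : f (none * some (0 : P)) = f (some cP) := by rw [h1]
    rw [map_mul, hfnone, hφ, hφ, mul_def, pad_none, pad_some, φzero, add_zero] at h2
    exact (Option.some.inj h2).symm
  have φdbl : ∀ (m : ℕ) (x : P), φ (dbl^[m] x) = dbl^[m] (φ x) := by
    intro m
    induction m with
    | zero => intro x; rfl
    | succ m ih =>
        intro x
        rw [Function.iterate_succ_apply, Function.iterate_succ_apply, ih (dbl x),
          show φ (dbl x) = dbl (φ x) from φadd x x]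
  intro s t hst
  cases s with
  | none =>
      cases t with
      | none => rfl
      | some y =>
          rw [hfnone, hφ] at hst
          exact absurd hst (by simp)
  | some x =>
      cases t with
      | none =>
          rw [hfnone, hφ] at hst
          exact absurd hst (by simp)
      | some y =>
          rw [hφ, hφ] at hst
          have hxy : φ x = φ y := Option.some.inj hst
          congr 1
          by_contra hne
          have hv : x - y ≠ 0 := sub_ne_zero.mpr hne
          have hφv : φ (x - y) = 0 := by
            have h1 : φ ((x - y) + y) = φ (x - y) + φ y := φadd _ _
            rw [sub_add_cancel, hxy] at h1
            exact (right_eq_add.mp h1)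
          obtain ⟨n, hn⟩ := mem_prufer_P (x - y)
          obtain ⟨m, hm⟩ := reach_c n (x - y) hn hv
          have : cP = 0 := by
            calc cP = φ cP := φc.symm
            _ = φ (dbl^[m] (x - y)) := by rw [hm]
            _ = dbl^[m] (φ (x - y)) := φdbl m _
            _ = dbl^[m] (0 : P) := by rw [hφv]
            _ = 0 := dbl_iter_zero m
          exact cP_ne_zero this
  
/-! ### T is not hopfian -/

def dblT : ↥T →ₙ* ↥T where
  toFun t := ⟨some (pad t.1 + pad t.1), ⟨_, rfl⟩⟩
  map_mul' t u := by
    apply Subtype.ext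
    show some (pad (t.1 * u.1) + pad (t.1 * u.1)) = (⟨_, _⟩ * ⟨_, _⟩ : ↥T).1
    rw [show ((⟨some (pad t.1 + pad t.1), ⟨_, rfl⟩⟩ * ⟨some (pad u.1 + pad u.1), ⟨_, rfl⟩⟩ : ↥T) : Option P)
      = some (pad t.1 + pad t.1) * some (pad u.1 + pad u.1) from rfl]
    rw [mul_def, mul_def, pad_some, pad_some, pad_some]
    congr 1
    abel

lemma notHopfT : ¬ IsHopfian ↥T := by
  intro h
  have hsurj : Function.Surjective dblT := by
    rintro ⟨s, x, rfl⟩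
    obtain ⟨y, hy⟩ := half_P x
    refine ⟨⟨some y, ⟨y, rfl⟩⟩, ?_⟩
    apply Subtype.ext
    show some (pad (some y) + pad (some y)) = some x
    rw [pad_some, hy]
  have hinj := h dblT hsurj
  have heq : dblT ⟨some cP, ⟨cP, rfl⟩⟩ = dblT ⟨some 0, ⟨0, rfl⟩⟩ := by
    apply Subtype.ext
    show some (pad (some cP) + pad (some cP)) = some (pad (some 0) + pad (some 0))
    rw [pad_some, pad_some, cP_add_cP, add_zero]
  have := hinj heq
  have : some cP = some (0 : P) := congrArg Subtype.val this
  exact cP_ne_zero (Option.some.inj this)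

end Stmt7

/-- There exist a hopfian semigroup `S` and a subsemigroup `T` with `S \ T` finite
such that `T` is not hopfian. -/
theorem stmt_7 : ∃ (S : Type) (_ : Semigroup S) (T : Subsemigroup S),
    ((T : Set S)ᶜ).Finite ∧ IsHopfian S ∧ ¬ IsHopfian T := by
  exact ⟨Option Stmt7.P, inferInstance, Stmt7.T, Stmt7.compl_T_finite, Stmt7.hopfS, Stmt7.notHopfT⟩
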